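/- Let ρ be a critical radius function, θ > 0, η = θ(N₀+1), and B = B(x₀,r) a ball. Define A_B^η f(x) = (1+r/ρ(x₀))^{-η} (1/|B|) ∫_B |f| · χ_B(x), and M_ρ^θ f(x) = sup_{s>0} (1+s/ρ(x))^{-θ} |B(x,s)|^{-1} ∫_{B(x,s)} |f|. Then A_B^η f(x) ≤ 2^{d+η} c_ρ^θ M_ρ^θ f(x) for every x ∈ ℝ^d and every locally integrable f. -/

import Mathlib

open MeasureTheory ENNReal Metric Set
open scoped Classical

noncomputable section

abbrev Ed (d : ℕ) := EuclideanSpace ℝ (Fin d)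

/-- `ρ` is a critical radius function on `ℝ^d` with constants `c ≥ 1` and `N ≥ 1`. -/
def IsCRF {d : ℕ} (ρ : Ed d → ℝ) (c N : ℝ) : Prop :=
  (∀ x, 0 < ρ x) ∧ 1 ≤ c ∧ 1 ≤ N ∧
    ∀ x y : Ed d,
      c⁻¹ * ρ x * (1 + dist x y / ρ x) ^ (-N) ≤ ρ y ∧
      ρ y ≤ c * ρ x * (1 + dist x y / ρ x) ^ (N / (N + 1))
/-- Average of `|f|` over the ball `B(x,r)` (as an extended nonnegative real). -/
def ballAvg {d : ℕ} (f : Ed d → ℝ) (x : Ed d) (r : ℝ) : ℝ≥0∞ :=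
  (volume (ball x r))⁻¹ * ∫⁻ y in ball x r, ENNReal.ofReal |f y|

/-- The local maximal operator `M_ρ^loc`. -/
def Mloc {d : ℕ} (ρ : Ed d → ℝ) (f : Ed d → ℝ) (x : Ed d) : ℝ≥0∞ :=
  ⨆ (r : ℝ) (_ : 0 < r) (_ : r ≤ ρ x), ballAvg f x r

/-- The maximal operator `M_ρ^θ`. -/
def Mtheta {d : ℕ} (ρ : Ed d → ℝ) (θ : ℝ) (f : Ed d → ℝ) (x : Ed d) : ℝ≥0∞ :=
  ⨆ (r : ℝ) (_ : 0 < r),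
    ENNReal.ofReal ((1 + r / ρ x) ^ (-θ)) * ballAvg f x r

/-- The part of `M_ρ^θ` with radii `r ≤ ρ(x)`. -/
def Mtheta1 {d : ℕ} (ρ : Ed d → ℝ) (θ : ℝ) (f : Ed d → ℝ) (x : Ed d) : ℝ≥0∞ :=
  ⨆ (r : ℝ) (_ : 0 < r) (_ : r ≤ ρ x),
    ENNReal.ofReal ((1 + r / ρ x) ^ (-θ)) * ballAvg f x r

/-- The part of `M_ρ^θ` with radii `r > ρ(x)`. -/
def Mtheta2 {d : ℕ} (ρ : Ed d → ℝ) (θ : ℝ) (f : Ed d → ℝ) (x : Ed d) : ℝ≥0∞ :=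
  ⨆ (r : ℝ) (_ : ρ x < r),
    ENNReal.ofReal ((1 + r / ρ x) ^ (-θ)) * ballAvg f x r

/-- The averaging operator `A_B^η` with `η = θ(N₀+1)` is pointwise dominated by
`2^{d+η} c_ρ^θ M_ρ^θ`. -/
theorem avg_le_Mtheta {d : ℕ} (ρ : Ed d → ℝ) (c N : ℝ) (hρ : IsCRF ρ c N)
    (θ : ℝ) (hθ : 0 < θ) (x₀ : Ed d) (r : ℝ) (hr : 0 < r)
    (f : Ed d → ℝ) (hf : LocallyIntegrable f volume) :
    ∀ x : Ed d,
      (ball x₀ r).indicator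
          (fun _ => ENNReal.ofReal ((1 + r / ρ x₀) ^ (-(θ * (N + 1)))) *
            ballAvg f x₀ r) x ≤
        ENNReal.ofReal ((2 : ℝ) ^ ((d : ℝ) + θ * (N + 1)) * c ^ θ) *
          Mtheta ρ θ f x := by
  obtain ⟨hpos, hc, hN, hcrf⟩ := hρ
  intro x
  by_cases hx : x ∈ ball x₀ r
  swap
  · rw [Set.indicator_of_notMem hx]; exact zero_le
  rw [Set.indicator_of_mem hx]
  have hρ₀ : 0 < ρ x₀ := hpos x₀
  have hρx : 0 < ρ x := hpos x
  have htpos : 0 < r / ρ x₀ := div_pos hr hρ₀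
  set t : ℝ := r / ρ x₀ with ht
  have hdist : dist x₀ x ≤ r := le_of_lt (by rw [dist_comm]; exact mem_ball.mp hx)
  -- lower bound on ρ x
  have h2 : c⁻¹ * ρ x₀ * (1 + t) ^ (-N) ≤ ρ x := by
    refine le_trans ?_ (hcrf x₀ x).1
    have hbase : 1 + dist x₀ x / ρ x₀ ≤ 1 + t := by
      rw [ht]; gcongr
    have := Real.rpow_le_rpow_of_nonpos (by positivity) hbase (by linarith : -N ≤ 0)
    have hcc : (0:ℝ) < c⁻¹ * ρ x₀ := by positivity
    calc c⁻¹ * ρ x₀ * (1 + t) ^ (-N)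
        ≤ c⁻¹ * ρ x₀ * (1 + dist x₀ x / ρ x₀) ^ (-N) := by gcongr
      _ = _ := rfl
  have hL : (0:ℝ) < c⁻¹ * ρ x₀ * (1 + t) ^ (-N) := by positivity
  have h1tN : (0:ℝ) < (1 + t) ^ N := by positivity
  have hkey : 1 + 2*r / ρ x ≤ 2*c*(1+t)^(N+1) := by
    have hdiv : 2*r / ρ x ≤ 2*r / (c⁻¹ * ρ x₀ * (1 + t) ^ (-N)) := by
      gcongr
    have heq : 2*r / (c⁻¹ * ρ x₀ * (1 + t) ^ (-N)) = 2*c*t*(1+t)^N := by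
      rw [Real.rpow_neg (by positivity), ht]
      field_simp
    have hone : (1:ℝ) ≤ (1 + t) ^ N := Real.one_le_rpow (by linarith) (by linarith)
    have hNadd : (1+t)^(N+1) = (1+t)^N * (1+t) := by
      rw [Real.rpow_add (by positivity), Real.rpow_one]
    rw [hNadd]
    nlinarith [hdiv, heq.le, heq.ge, mul_pos (mul_pos two_pos (lt_of_lt_of_le one_pos hc)) h1tN]
  -- volume comparison
  have hsub : ball x₀ r ⊆ ball x (2*r) := ball_subset_ball' (by linarith)
  have hvol : volume (ball x (2*r)) = ENNReal.ofReal ((2:ℝ)^(d:ℕ)) * volume (ball x₀ r) := by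
    rw [Measure.addHaar_ball_mul_of_pos volume x two_pos r,
      show volume (ball x₀ r) = volume (ball (0 : Ed d) r) from
        Measure.addHaar_ball_center volume x₀ r, finrank_euclideanSpace_fin]
  have hD0 : ENNReal.ofReal ((2:ℝ)^(d:ℕ)) ≠ 0 := by positivity
  have hDtop : ENNReal.ofReal ((2:ℝ)^(d:ℕ)) ≠ ⊤ := ENNReal.ofReal_ne_top
  have hAvg : ballAvg f x₀ r ≤ ENNReal.ofReal ((2:ℝ)^(d:ℕ)) * ballAvg f x (2*r) := by
    unfold ballAvg
    rw [hvol, ENNReal.mul_inv (Or.inl hD0) (Or.inl hDtop), ← mul_assoc, ← mul_assoc,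
      ENNReal.mul_inv_cancel hD0 hDtop, one_mul]
    gcongr
  have hM : ENNReal.ofReal ((1 + 2*r / ρ x) ^ (-θ)) * ballAvg f x (2*r) ≤ Mtheta ρ θ f x := by
    refine le_iSup_of_le (2*r) ?_
    exact le_iSup_of_le (by linarith) le_rfl
  -- scalar inequality
  set η : ℝ := θ * (N + 1) with hη
  have hQ : (0:ℝ) < (1 + 2*r / ρ x) := by positivity
  have hP : (0:ℝ) < (1 + t) := by positivity
  have hA : (1 + 2*r / ρ x) ^ θ ≤ (2*c)^θ * (1+t)^η := by
    calc (1 + 2*r / ρ x) ^ θ ≤ (2*c*(1+t)^(N+1)) ^ θ :=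
          Real.rpow_le_rpow hQ.le hkey hθ.le
      _ = (2*c)^θ * ((1+t)^(N+1))^θ := Real.mul_rpow (by positivity) (by positivity)
      _ = (2*c)^θ * (1+t)^η := by
          rw [hη, mul_comm θ, Real.rpow_mul hP.le]
  have hmain : (2:ℝ)^(d:ℕ) * (1 + 2*r / ρ x) ^ θ ≤
      (2:ℝ) ^ ((d:ℝ) + η) * c ^ θ * (1+t)^η := by
    have h2c : (2*c)^θ = 2^θ * c^θ := Real.mul_rpow (by norm_num) (by linarith)
    have hθη : θ ≤ η := by nlinarith
    have h2exp : (2:ℝ)^(d:ℕ) * (2:ℝ)^θ ≤ (2:ℝ)^((d:ℝ)+η) := by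
      rw [← Real.rpow_natCast 2 d, ← Real.rpow_add two_pos]
      exact Real.rpow_le_rpow_of_exponent_le one_le_two (by linarith)
    calc (2:ℝ)^(d:ℕ) * (1 + 2*r / ρ x) ^ θ
        ≤ (2:ℝ)^(d:ℕ) * ((2*c)^θ * (1+t)^η) := by gcongr
      _ = ((2:ℝ)^(d:ℕ) * 2^θ) * (c^θ * (1+t)^η) := by rw [h2c]; ring
      _ ≤ (2:ℝ)^((d:ℝ)+η) * (c^θ * (1+t)^η) := by gcongr
      _ = _ := by ring
  have hreal : (1 + t) ^ (-η) * (2:ℝ)^(d:ℕ) ≤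
      ((2:ℝ) ^ ((d:ℝ) + η) * c ^ θ) * (1 + 2*r / ρ x) ^ (-θ) := by
    rw [Real.rpow_neg hP.le, Real.rpow_neg hQ.le, inv_mul_eq_div, ← div_eq_mul_inv,
      div_le_div_iff₀ (by positivity) (by positivity)]
    exact hmain
  have hc0 : (0:ℝ) < c := lt_of_lt_of_le one_pos hc
  calc ENNReal.ofReal ((1 + t) ^ (-η)) * ballAvg f x₀ r
      ≤ ENNReal.ofReal ((1 + t) ^ (-η)) *
        (ENNReal.ofReal ((2:ℝ)^(d:ℕ)) * ballAvg f x (2*r)) := by gcongr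
    _ = ENNReal.ofReal ((1 + t) ^ (-η) * (2:ℝ)^(d:ℕ)) * ballAvg f x (2*r) := by
        rw [ENNReal.ofReal_mul (by positivity), mul_assoc]
    _ ≤ ENNReal.ofReal (((2:ℝ) ^ ((d:ℝ) + η) * c ^ θ) * (1 + 2*r / ρ x) ^ (-θ)) *
        ballAvg f x (2*r) := by
        exact mul_le_mul_left (ENNReal.ofReal_le_ofReal hreal) _
    _ = ENNReal.ofReal ((2:ℝ) ^ ((d:ℝ) + η) * c ^ θ) *
        (ENNReal.ofReal ((1 + 2*r / ρ x) ^ (-θ)) * ballAvg f x (2*r)) := by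
        rw [ENNReal.ofReal_mul (by positivity), mul_assoc]
    _ ≤ ENNReal.ofReal ((2:ℝ) ^ ((d:ℝ) + η) * c ^ θ) * Mtheta ρ θ f x := by gcongr
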